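/- The ternary quadratic form Q₃(x,y,z) = x² + y² + 3z² is an ADC form: for every integer n, if there exist rational numbers x, y, z with x² + y² + 3z² = n, then there exist integers x, y, z with x² + y² + 3z² = n. -/
import Mathlib

lemma quarter_lemma (b c : ℤ) (hb : b % 2 = 1) (hc : c % 2 = 1) :
    ∃ x y : ℤ, 4 * (x ^ 2 + 3 * y ^ 2) = b ^ 2 + 3 * c ^ 2 := by
  have h : (4 : ℤ) ∣ b + c ∨ (4 : ℤ) ∣ b - c := by omega
  rcases h with ⟨p, hp⟩ | ⟨q, hq⟩
  · refine ⟨p - c, p, ?_⟩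
    have hb' : b = 4 * p - c := by omega
    subst hb'; ring
  · refine ⟨-(q + c), q, ?_⟩
    have hb' : b = 4 * q + c := by omega
    subst hb'; ring

/-- If `a² + b² + 3c² = 4N` then `N` is represented by the same form. -/
lemma halve_lemma (N a b c : ℤ) (h : a ^ 2 + b ^ 2 + 3 * c ^ 2 = 4 * N) :
    ∃ x y z : ℤ, x ^ 2 + y ^ 2 + 3 * z ^ 2 = N := by
  have ha2 := Int.emod_two_eq a
  have hb2 := Int.emod_two_eq b
  have hc2 := Int.emod_two_eq c
  rcases ha2 with ha | ha <;> rcases hb2 with hb | hb <;> rcases hc2 with hc | hc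
  · -- all even
    obtain ⟨A, rfl⟩ : (2:ℤ) ∣ a := Int.dvd_of_emod_eq_zero ha
    obtain ⟨B, rfl⟩ : (2:ℤ) ∣ b := Int.dvd_of_emod_eq_zero hb
    obtain ⟨C, rfl⟩ : (2:ℤ) ∣ c := Int.dvd_of_emod_eq_zero hc
    exact ⟨A, B, C, by linarith [h]⟩
  · -- a even, b even, c odd : impossible mod 4
    exfalso
    obtain ⟨A, rfl⟩ : (2:ℤ) ∣ a := Int.dvd_of_emod_eq_zero ha
    obtain ⟨B, rfl⟩ : (2:ℤ) ∣ b := Int.dvd_of_emod_eq_zero hb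
    obtain ⟨C, hC⟩ : ∃ C, c = 2 * C + 1 := ⟨(c-1)/2, by omega⟩
    subst hC
    have h' : 4 * (A ^ 2 + B ^ 2 + 3 * C ^ 2 + 3 * C) + 3 = 4 * N := by linarith [h, sq_nonneg (1:ℤ)] 
    omega
  · -- a even, b odd, c even : impossible
    exfalso
    obtain ⟨A, rfl⟩ : (2:ℤ) ∣ a := Int.dvd_of_emod_eq_zero ha
    obtain ⟨B, hB⟩ : ∃ B, b = 2 * B + 1 := ⟨(b-1)/2, by omega⟩
    obtain ⟨C, rfl⟩ : (2:ℤ) ∣ c := Int.dvd_of_emod_eq_zero hc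
    subst hB
    have h' : 4 * (A ^ 2 + B ^ 2 + B + 3 * C ^ 2) + 1 = 4 * N := by linarith [h]
    omega
  · -- a even, b odd, c odd : use quarter lemma on (b, c)
    obtain ⟨A, rfl⟩ : (2:ℤ) ∣ a := Int.dvd_of_emod_eq_zero ha
    obtain ⟨x, y, hxy⟩ := quarter_lemma b c hb hc
    exact ⟨x, A, y, by linarith [h, hxy]⟩
  · -- a odd, b even, c even : impossible
    exfalso
    obtain ⟨A, hA⟩ : ∃ A, a = 2 * A + 1 := ⟨(a-1)/2, by omega⟩
    obtain ⟨B, rfl⟩ : (2:ℤ) ∣ b := Int.dvd_of_emod_eq_zero hb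
    obtain ⟨C, rfl⟩ : (2:ℤ) ∣ c := Int.dvd_of_emod_eq_zero hc
    subst hA
    have h' : 4 * (A ^ 2 + A + B ^ 2 + 3 * C ^ 2) + 1 = 4 * N := by linarith [h]
    omega
  · -- a odd, b even, c odd : quarter lemma on (a, c)
    obtain ⟨B, rfl⟩ : (2:ℤ) ∣ b := Int.dvd_of_emod_eq_zero hb
    obtain ⟨x, y, hxy⟩ := quarter_lemma a c ha hc
    exact ⟨x, B, y, by linarith [h, hxy]⟩
  · -- a odd, b odd, c even : impossible
    exfalso
    obtain ⟨A, hA⟩ : ∃ A, a = 2 * A + 1 := ⟨(a-1)/2, by omega⟩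
    obtain ⟨B, hB⟩ : ∃ B, b = 2 * B + 1 := ⟨(b-1)/2, by omega⟩
    obtain ⟨C, rfl⟩ : (2:ℤ) ∣ c := Int.dvd_of_emod_eq_zero hc
    subst hA; subst hB
    have h' : 4 * (A ^ 2 + A + B ^ 2 + B + 3 * C ^ 2) + 2 = 4 * N := by linarith [h]
    omega
  · -- all odd : impossible
    exfalso
    obtain ⟨A, hA⟩ : ∃ A, a = 2 * A + 1 := ⟨(a-1)/2, by omega⟩
    obtain ⟨B, hB⟩ : ∃ B, b = 2 * B + 1 := ⟨(b-1)/2, by omega⟩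
    obtain ⟨C, hC⟩ : ∃ C, c = 2 * C + 1 := ⟨(c-1)/2, by omega⟩
    subst hA; subst hB; subst hC
    have h' : 4 * (A ^ 2 + A + B ^ 2 + B + 3 * C ^ 2 + 3 * C) + 5 = 4 * N := by linarith [h]
    omega

/-- Aubry reflection step, fully explicit. -/
lemma reflect_lemma (n d a b c α β γ : ℤ)
    (main : a ^ 2 + b ^ 2 + 3 * c ^ 2 = n * d ^ 2) :
    (a * ((α^2+β^2+3*γ^2) - n) + 2 * (n*d - (a*α+b*β+3*c*γ)) * α) ^ 2
  + (b * ((α^2+β^2+3*γ^2) - n) + 2 * (n*d - (a*α+b*β+3*c*γ)) * β) ^ 2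
  + 3 * (c * ((α^2+β^2+3*γ^2) - n) + 2 * (n*d - (a*α+b*β+3*c*γ)) * γ) ^ 2
  = n * (n*d - 2*(a*α+b*β+3*c*γ) + d*(α^2+β^2+3*γ^2)) ^ 2 := by
  linear_combination ((α^2+β^2+3*γ^2) - n)^2 * main

/-- Centered division for odd modulus. -/
lemma centered_div (a d : ℤ) (hd : 0 < d) (hodd : d % 2 = 1) :
    ∃ q r : ℤ, a = d * q + r ∧ 2 * |r| ≤ d - 1 := by
  have h0 : a = d * (a / d) + a % d := (Int.mul_ediv_add_emod a d).symm
  have h1 : 0 ≤ a % d := Int.emod_nonneg a (by omega)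
  have h2 : a % d < d := Int.emod_lt_of_pos a hd
  by_cases hle : 2 * (a % d) ≤ d - 1
  · exact ⟨a / d, a % d, h0, by rw [abs_of_nonneg h1]; exact hle⟩
  · refine ⟨a / d + 1, a % d - d, by linarith, ?_⟩
    rw [abs_of_nonpos (by omega)]
    omega

/-- Parity/size behaviour when flipping one of the first two coordinates. -/
lemma flipA (d p q w : ℤ) (hdodd : d % 2 = 1)
    (hQodd : (p^2 + q^2 + 3*w^2) % 2 = 1)
    (hb : p^2 + q^2 + 3*w^2 < d^2 + 2*d*p) :
    ((p - d)^2 + q^2 + 3*w^2) % 2 = 0 ∧ (p - d)^2 + q^2 + 3*w^2 < 2 * d^2 := by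
  have hexp : (p - d)^2 + q^2 + 3*w^2 = (p^2 + q^2 + 3*w^2) + d^2 - 2*(d*p) := by ring
  have hd2 : d^2 % 2 = 1 := by
    have : Odd (d^2) := (Int.odd_iff.mpr hdodd).pow
    exact Int.odd_iff.mp this
  constructor
  · rw [hexp]
    generalize (p^2 + q^2 + 3*w^2) = Q at hQodd ⊢
    generalize d^2 = D2 at hd2 ⊢
    generalize d*p = W
    omega
  · rw [hexp]; linarith

/-- Parity/size behaviour when flipping the third coordinate. -/
lemma flipB (d p q w : ℤ) (hdodd : d % 2 = 1)
    (hQodd : (p^2 + q^2 + 3*w^2) % 2 = 1)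
    (hb : p^2 + q^2 + 3*w^2 < 6*d*w - d^2) :
    (p^2 + q^2 + 3*(w - d)^2) % 2 = 0 ∧ p^2 + q^2 + 3*(w - d)^2 < 2 * d^2 := by
  have hexp : p^2 + q^2 + 3*(w - d)^2 = (p^2 + q^2 + 3*w^2) + 3*d^2 - 6*(d*w) := by ring
  have hd2 : d^2 % 2 = 1 := by
    have : Odd (d^2) := (Int.odd_iff.mpr hdodd).pow
    exact Int.odd_iff.mp this
  constructor
  · rw [hexp]
    generalize (p^2 + q^2 + 3*w^2) = Q at hQodd ⊢
    generalize d^2 = D2 at hd2 ⊢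
    generalize d*w = W
    omega
  · rw [hexp]; linarith

lemma sq_bound (d r : ℤ) (h : 2 * |r| ≤ d - 1) : 4 * r^2 ≤ (d-1)^2 := by
  have h' : |2*r| ≤ d - 1 := by rw [abs_mul]; simpa using h
  have := sq_le_sq' (abs_le.mp h').1 (abs_le.mp h').2
  nlinarith [this]

/-- The key choice: one can always shift the approximating lattice point so that
the error `Q'` is even and `< 2d²`. -/
lemma choose_flip (d r₁ r₂ r₃ : ℤ) (hd : 0 < d) (hdodd : d % 2 = 1)
    (h1 : 2*|r₁| ≤ d - 1) (h2 : 2*|r₂| ≤ d - 1) (h3 : 2*|r₃| ≤ d - 1) :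
    ∃ t₁ t₂ t₃ : ℤ,
      ((r₁ - t₁*d)^2 + (r₂ - t₂*d)^2 + 3*(r₃ - t₃*d)^2) % 2 = 0 ∧
      (r₁ - t₁*d)^2 + (r₂ - t₂*d)^2 + 3*(r₃ - t₃*d)^2 < 2*d^2 := by
  have hb1 := sq_bound d r₁ h1
  have hb2 := sq_bound d r₂ h2
  have hb3 := sq_bound d r₃ h3
  have hQbound : r₁^2 + r₂^2 + 3*r₃^2 < 2*d^2 := by nlinarith [hd]
  by_cases hpar : (r₁^2 + r₂^2 + 3*r₃^2) % 2 = 0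
  · exact ⟨0, 0, 0, by simpa using hpar, by simpa using hQbound⟩
  · have hQodd : (r₁^2 + r₂^2 + 3*r₃^2) % 2 = 1 := by omega
    -- key disjunction
    have key : r₁^2 + r₂^2 + 3*r₃^2 < d^2 + 2*d*|r₁| ∨
               r₁^2 + r₂^2 + 3*r₃^2 < d^2 + 2*d*|r₂| ∨
               r₁^2 + r₂^2 + 3*r₃^2 < 6*d*|r₃| - d^2 := by
      by_contra hc
      push_neg at hc
      obtain ⟨k1, k2, k3⟩ := hc
      have m1 : (0:ℤ) ≤ |r₁| := abs_nonneg _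
      have m2 : (0:ℤ) ≤ |r₂| := abs_nonneg _
      have m3 : (0:ℤ) ≤ |r₃| := abs_nonneg _
      have s1 : r₁^2 = |r₁|^2 := (sq_abs _).symm
      have s2 : r₂^2 = |r₂|^2 := (sq_abs _).symm
      have s3 : r₃^2 = |r₃|^2 := (sq_abs _).symm
      have p1 : (d - 1 - 2*|r₁|) * |r₁| ≥ 0 := mul_nonneg (by linarith) m1
      have p2 : (d - 1 - 2*|r₂|) * |r₂| ≥ 0 := mul_nonneg (by linarith) m2
      have p3 : (d - 1 - 2*|r₃|) * |r₃| ≥ 0 := mul_nonneg (by linarith) m3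
      nlinarith [p1, p2, p3, k1, k2, k3, mul_pos hd hd, m1, m2, m3, s1, s2, s3]
    rcases key with hk | hk | hk
    · rcases le_or_gt 0 r₁ with hs | hs
      · have habs : |r₁| = r₁ := abs_of_nonneg hs
        rw [habs] at hk
        obtain ⟨hp, hq⟩ := flipA d r₁ r₂ r₃ hdodd hQodd hk
        refine ⟨1, 0, 0, ?_, ?_⟩
        · have e : (r₁ - 1*d)^2 + (r₂ - 0*d)^2 + 3*(r₃ - 0*d)^2
              = (r₁ - d)^2 + r₂^2 + 3*r₃^2 := by ring
          rw [e]; exact hp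
        · have e : (r₁ - 1*d)^2 + (r₂ - 0*d)^2 + 3*(r₃ - 0*d)^2
              = (r₁ - d)^2 + r₂^2 + 3*r₃^2 := by ring
          rw [e]; exact hq
      · have habs : |r₁| = -r₁ := abs_of_neg hs
        rw [habs] at hk
        have hQodd' : ((-r₁)^2 + r₂^2 + 3*r₃^2) % 2 = 1 := by
          have e : (-r₁)^2 + r₂^2 + 3*r₃^2 = r₁^2 + r₂^2 + 3*r₃^2 := by ring
          rw [e]; exact hQodd
        obtain ⟨hp, hq⟩ := flipA d (-r₁) r₂ r₃ hdodd hQodd' (by linarith [hk])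
        refine ⟨-1, 0, 0, ?_, ?_⟩
        · have e : (r₁ - (-1)*d)^2 + (r₂ - 0*d)^2 + 3*(r₃ - 0*d)^2
              = ((-r₁) - d)^2 + r₂^2 + 3*r₃^2 := by ring
          rw [e]; exact hp
        · have e : (r₁ - (-1)*d)^2 + (r₂ - 0*d)^2 + 3*(r₃ - 0*d)^2
              = ((-r₁) - d)^2 + r₂^2 + 3*r₃^2 := by ring
          rw [e]; exact hq
    · rcases le_or_gt 0 r₂ with hs | hs
      · have habs : |r₂| = r₂ := abs_of_nonneg hs
        rw [habs] at hk
        have hQodd' : (r₂^2 + r₁^2 + 3*r₃^2) % 2 = 1 := by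
          have e : r₂^2 + r₁^2 + 3*r₃^2 = r₁^2 + r₂^2 + 3*r₃^2 := by ring
          rw [e]; exact hQodd
        obtain ⟨hp, hq⟩ := flipA d r₂ r₁ r₃ hdodd hQodd' (by linarith [hk])
        refine ⟨0, 1, 0, ?_, ?_⟩
        · have e : (r₁ - 0*d)^2 + (r₂ - 1*d)^2 + 3*(r₃ - 0*d)^2
              = (r₂ - d)^2 + r₁^2 + 3*r₃^2 := by ring
          rw [e]; exact hp
        · have e : (r₁ - 0*d)^2 + (r₂ - 1*d)^2 + 3*(r₃ - 0*d)^2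
              = (r₂ - d)^2 + r₁^2 + 3*r₃^2 := by ring
          rw [e]; exact hq
      · have habs : |r₂| = -r₂ := abs_of_neg hs
        rw [habs] at hk
        have hQodd' : ((-r₂)^2 + r₁^2 + 3*r₃^2) % 2 = 1 := by
          have e : (-r₂)^2 + r₁^2 + 3*r₃^2 = r₁^2 + r₂^2 + 3*r₃^2 := by ring
          rw [e]; exact hQodd
        obtain ⟨hp, hq⟩ := flipA d (-r₂) r₁ r₃ hdodd hQodd' (by linarith [hk])
        refine ⟨0, -1, 0, ?_, ?_⟩
        · have e : (r₁ - 0*d)^2 + (r₂ - (-1)*d)^2 + 3*(r₃ - 0*d)^2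
              = ((-r₂) - d)^2 + r₁^2 + 3*r₃^2 := by ring
          rw [e]; exact hp
        · have e : (r₁ - 0*d)^2 + (r₂ - (-1)*d)^2 + 3*(r₃ - 0*d)^2
              = ((-r₂) - d)^2 + r₁^2 + 3*r₃^2 := by ring
          rw [e]; exact hq
    · rcases le_or_gt 0 r₃ with hs | hs
      · have habs : |r₃| = r₃ := abs_of_nonneg hs
        rw [habs] at hk
        obtain ⟨hp, hq⟩ := flipB d r₁ r₂ r₃ hdodd hQodd hk
        exact ⟨0, 0, 1, by
          have e : (r₁ - 0*d)^2 + (r₂ - 0*d)^2 + 3*(r₃ - 1*d)^2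
              = r₁^2 + r₂^2 + 3*(r₃ - d)^2 := by ring
          rw [e]; exact hp, by
          have e : (r₁ - 0*d)^2 + (r₂ - 0*d)^2 + 3*(r₃ - 1*d)^2
              = r₁^2 + r₂^2 + 3*(r₃ - d)^2 := by ring
          rw [e]; exact hq⟩
      · have habs : |r₃| = -r₃ := abs_of_neg hs
        rw [habs] at hk
        have hQodd' : (r₁^2 + r₂^2 + 3*(-r₃)^2) % 2 = 1 := by
          have e : r₁^2 + r₂^2 + 3*(-r₃)^2 = r₁^2 + r₂^2 + 3*r₃^2 := by ring
          rw [e]; exact hQodd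
        obtain ⟨hp, hq⟩ := flipB d r₁ r₂ (-r₃) hdodd hQodd' (by linarith [hk])
        exact ⟨0, 0, -1, by
          have e : (r₁ - 0*d)^2 + (r₂ - 0*d)^2 + 3*(r₃ - (-1)*d)^2
              = r₁^2 + r₂^2 + 3*((-r₃) - d)^2 := by ring
          rw [e]; exact hp, by
          have e : (r₁ - 0*d)^2 + (r₂ - 0*d)^2 + 3*(r₃ - (-1)*d)^2
              = r₁^2 + r₂^2 + 3*((-r₃) - d)^2 := by ring
          rw [e]; exact hq⟩

set_option maxRecDepth 8000 in
set_option maxHeartbeats 2000000 in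
lemma descent (n : ℤ) : ∀ D : ℕ, 0 < D →
    (∃ a b c : ℤ, a ^ 2 + b ^ 2 + 3 * c ^ 2 = n * (D : ℤ) ^ 2) →
    ∃ x y z : ℤ, x ^ 2 + y ^ 2 + 3 * z ^ 2 = n := by
  intro D
  induction D using Nat.strong_induction_on with
  | _ D IH =>
    intro hD hsol
    obtain ⟨a, b, c, main⟩ := hsol
    by_cases hD1 : D = 1
    · subst hD1
      exact ⟨a, b, c, by simpa using main⟩
    rcases Nat.even_or_odd D with hev | hodd
    · -- even denominator : halve
      obtain ⟨k, hk⟩ := hev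
      have hk0 : 0 < k := by omega
      have main' : a ^ 2 + b ^ 2 + 3 * c ^ 2 = 4 * (n * (k : ℤ) ^ 2) := by
        subst hk; push_cast at main ⊢; linear_combination main
      obtain ⟨x, y, z, hxyz⟩ := halve_lemma (n * (k : ℤ) ^ 2) a b c main'
      exact IH k (by omega) hk0 ⟨x, y, z, hxyz⟩
    · -- odd denominator ≥ 3
      obtain ⟨d, hdDef⟩ : ∃ d : ℤ, d = (D : ℤ) := ⟨_, rfl⟩
      rw [← hdDef] at main
      have hd : 0 < d := by rw [hdDef]; positivity
      have hDo : D % 2 = 1 := Nat.odd_iff.mp hodd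
      have hdodd : d % 2 = 1 := by rw [hdDef]; omega
      obtain ⟨α, r₁, ha, h1⟩ := centered_div a d hd hdodd
      obtain ⟨β, r₂, hb, h2⟩ := centered_div b d hd hdodd
      obtain ⟨γ, r₃, hc, h3⟩ := centered_div c d hd hdodd
      obtain ⟨t₁, t₂, t₃, hpar, hbound⟩ := choose_flip d r₁ r₂ r₃ hd hdodd h1 h2 h3
      -- the shifted approximation
      have hr1 : a - d * (α + t₁) = r₁ - t₁ * d := by rw [ha]; ring
      have hr2 : b - d * (β + t₂) = r₂ - t₂ * d := by rw [hb]; ring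
      have hr3 : c - d * (γ + t₃) = r₃ - t₃ * d := by rw [hc]; ring
      have hrefl := reflect_lemma n d a b c (α + t₁) (β + t₂) (γ + t₃) main
      by_cases hQ0 : (r₁ - t₁*d)^2 + (r₂ - t₂*d)^2 + 3*(r₃ - t₃*d)^2 = 0
      · -- the point is integral
        clear hrefl
        have hz1 : (r₁ - t₁*d)^2 = 0 := by
          have := sq_nonneg (r₁ - t₁*d); have := sq_nonneg (r₂ - t₂*d)
          have := sq_nonneg (r₃ - t₃*d); linarith
        have hz2 : (r₂ - t₂*d)^2 = 0 := by
          have := sq_nonneg (r₁ - t₁*d); have := sq_nonneg (r₂ - t₂*d)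
          have := sq_nonneg (r₃ - t₃*d); linarith
        have hz3 : (r₃ - t₃*d)^2 = 0 := by
          have := sq_nonneg (r₁ - t₁*d); have := sq_nonneg (r₂ - t₂*d)
          have := sq_nonneg (r₃ - t₃*d); linarith
        have z1 : a - d * (α + t₁) = 0 := by rw [hr1]; exact pow_eq_zero_iff (by norm_num) |>.mp hz1
        have z2 : b - d * (β + t₂) = 0 := by rw [hr2]; exact pow_eq_zero_iff (by norm_num) |>.mp hz2
        have z3 : c - d * (γ + t₃) = 0 := by rw [hr3]; exact pow_eq_zero_iff (by norm_num) |>.mp hz3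
        refine ⟨α + t₁, β + t₂, γ + t₃, ?_⟩
        have hd2 : (d:ℤ)^2 ≠ 0 := by positivity
        have key : d^2 * ((α + t₁)^2 + (β + t₂)^2 + 3*(γ + t₃)^2) = d^2 * n := by
          have ea : a = d * (α + t₁) := by linarith
          have eb : b = d * (β + t₂) := by linarith
          have ec : c = d * (γ + t₃) := by linarith
          rw [ea, eb, ec] at main; linear_combination main
        exact mul_left_cancel₀ hd2 key
      · -- positive error, even, < 2d²
        obtain ⟨E, hE⟩ : ∃ E : ℤ, E = n*d - 2*(a*(α + t₁)+b*(β + t₂)+3*c*(γ + t₃))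
            + d*((α + t₁)^2+(β + t₂)^2+3*(γ + t₃)^2) := ⟨_, rfl⟩
        rw [← hE] at hrefl
        have hde : d * E = (r₁ - t₁*d)^2 + (r₂ - t₂*d)^2 + 3*(r₃ - t₃*d)^2 := by
          rw [← hr1, ← hr2, ← hr3, hE]; linear_combination -main
        have hQpos : 0 < (r₁ - t₁*d)^2 + (r₂ - t₂*d)^2 + 3*(r₃ - t₃*d)^2 := by
          rcases lt_or_eq_of_le (by positivity :
            (0:ℤ) ≤ (r₁ - t₁*d)^2 + (r₂ - t₂*d)^2 + 3*(r₃ - t₃*d)^2) with h | h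
          · exact h
          · exact absurd h.symm hQ0
        have hEpos : 0 < E := by
          by_contra hE0
          push_neg at hE0
          have hmul : d * E ≤ 0 := mul_nonpos_of_nonneg_of_nonpos (le_of_lt hd) hE0
          linarith
        have hElt : E < 2 * d := by
          have h2d : d * (2 * d) = 2 * d ^ 2 := by ring
          have hlt : d * E < d * (2 * d) := by rw [hde, h2d]; exact hbound
          exact lt_of_mul_lt_mul_left hlt (le_of_lt hd)
        have hEeven : Even E := by
          have hdE : Even (d * E) := by
            rw [hde]; exact Int.even_iff.mpr hpar
          rcases Int.even_mul.mp hdE with h | h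
          · exact absurd (Int.even_iff.mp h) (by omega)
          · exact h
        obtain ⟨e₀, he₀⟩ := hEeven
        have he₀pos : 0 < e₀ := by omega
        have he₀lt : e₀ < d := by omega
        rw [he₀] at hrefl
        have hrw : n * (e₀ + e₀) ^ 2 = 4 * (n * e₀ ^ 2) := by ring
        rw [hrw] at hrefl
        obtain ⟨x, y, z, hxyz⟩ := halve_lemma (n * e₀ ^ 2) _ _ _ hrefl
        refine IH e₀.toNat (by omega) (by omega) ⟨x, y, z, ?_⟩
        rw [Int.toNat_of_nonneg (le_of_lt he₀pos)]
        exact hxyz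

/-- The ternary quadratic form `Q₃(x,y,z) = x² + y² + 3z²` is an ADC form: any integer
represented by `Q₃` over the rationals is represented by `Q₃` over the integers. -/
theorem Q3_is_ADC (n : ℤ) (h : ∃ x y z : ℚ, x ^ 2 + y ^ 2 + 3 * z ^ 2 = (n : ℚ)) :
    ∃ x y z : ℤ, x ^ 2 + y ^ 2 + 3 * z ^ 2 = n := by
  obtain ⟨x, y, z, h⟩ := h
  set Dn : ℕ := x.den * y.den * z.den with hDn
  have hDpos : 0 < Dn := by positivity
  refine descent n Dn hDpos ⟨x.num * (y.den : ℤ) * (z.den : ℤ),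
    (x.den : ℤ) * y.num * (z.den : ℤ), (x.den : ℤ) * (y.den : ℤ) * z.num, ?_⟩
  have hxden : ((x.den : ℚ)) ≠ 0 := by positivity
  have hyden : ((y.den : ℚ)) ≠ 0 := by positivity
  have hzden : ((z.den : ℚ)) ≠ 0 := by positivity
  have hx : (x.num : ℚ) = x * (x.den : ℚ) := (div_eq_iff hxden).mp (Rat.num_div_den x)
  have hy : (y.num : ℚ) = y * (y.den : ℚ) := (div_eq_iff hyden).mp (Rat.num_div_den y)
  have hz : (z.num : ℚ) = z * (z.den : ℚ) := (div_eq_iff hzden).mp (Rat.num_div_den z)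
  have key : ((x.num * (y.den : ℤ) * (z.den : ℤ) : ℤ) : ℚ) ^ 2
      + (((x.den : ℤ) * y.num * (z.den : ℤ) : ℤ) : ℚ) ^ 2
      + 3 * (((x.den : ℤ) * (y.den : ℤ) * z.num : ℤ) : ℚ) ^ 2
      = (n : ℚ) * ((Dn : ℤ) : ℚ) ^ 2 := by
    push_cast
    rw [hDn]
    push_cast
    rw [hx, hy, hz]
    calc (x * x.den * y.den * z.den) ^ 2 + (x.den * (y * y.den) * z.den) ^ 2
        + 3 * (x.den * y.den * (z * z.den)) ^ 2
        = (x ^ 2 + y ^ 2 + 3 * z ^ 2) * (x.den * y.den * z.den : ℚ) ^ 2 := by ring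
      _ = (n : ℚ) * (x.den * y.den * z.den : ℚ) ^ 2 := by rw [h]
      _ = _ := by ring
  exact_mod_cast key
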